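/- arXiv:1804.03714 — 5 statements merged into one kernel-verified Lean document; each statement's English description precedes it below -/
import Mathlib

section
/- For x > -1 and λ > 0, the function F(x) = Γ(x+1, λ)/Γ(x+1), where Γ(x, λ) = ∫_λ^∞ e^{-s} s^{x-1} ds is the upper incomplete Gamma function, is non-decreasing in x. -/
open MeasureTheory Set

/-- Upper incomplete Gamma function `Γ(a, λ) = ∫_λ^∞ e^{-s} s^{a-1} ds`. -/
noncomputable def incGamma (a lam : ℝ) : ℝ :=
  ∫ s in Set.Ioi lam, Real.exp (-s) * s ^ (a - 1)

/-- Lower incomplete Gamma function. -/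
noncomputable def lowGamma (a lam : ℝ) : ℝ :=
  ∫ s in Set.Ioc 0 lam, Real.exp (-s) * s ^ (a - 1)

lemma integrableOn_upper (a lam : ℝ) (ha : 0 < a) (hlam : 0 < lam) :
    IntegrableOn (fun s => Real.exp (-s) * s ^ (a - 1)) (Set.Ioi lam) :=
  (Real.GammaIntegral_convergent ha).mono_set (Set.Ioi_subset_Ioi hlam.le)

lemma integrableOn_lower (a lam : ℝ) (ha : 0 < a) (hlam : 0 < lam) :
    IntegrableOn (fun s => Real.exp (-s) * s ^ (a - 1)) (Set.Ioc 0 lam) :=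
  (Real.GammaIntegral_convergent ha).mono_set Set.Ioc_subset_Ioi_self

lemma gamma_split (a lam : ℝ) (ha : 0 < a) (hlam : 0 < lam) :
    Real.Gamma a = lowGamma a lam + incGamma a lam := by
  rw [Real.Gamma_eq_integral ha, ← Set.Ioc_union_Ioi_eq_Ioi hlam.le,
    setIntegral_union (Set.Ioc_disjoint_Ioi le_rfl) measurableSet_Ioi
      (integrableOn_lower a lam ha hlam) (integrableOn_upper a lam ha hlam)]
  rfl

lemma key_ineq (lam a b : ℝ) (hlam : 0 < lam) (ha : 0 < a) (hab : a ≤ b) :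
    incGamma a lam * lowGamma b lam ≤ incGamma b lam * lowGamma a lam := by
  have hb : 0 < b := lt_of_lt_of_le ha hab
  have step : ∀ s ∈ Set.Ioi lam,
      Real.exp (-s) * s ^ (a - 1) * lowGamma b lam ≤
      Real.exp (-s) * s ^ (b - 1) * lowGamma a lam := by
    intro s hs
    have hsl : lam < s := hs
    have hs0 : 0 < s := hlam.trans hsl
    unfold lowGamma
    rw [← integral_const_mul, ← integral_const_mul]
    apply setIntegral_mono_on
    · exact (integrableOn_lower b lam hb hlam).const_mul _
    · exact (integrableOn_lower a lam ha hlam).const_mul _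
    · exact measurableSet_Ioc
    · intro t ht
      have ht0 : 0 < t := ht.1
      have hts : t ≤ s := ht.2.trans hsl.le
      have hkey : s ^ (a - 1) * t ^ (b - 1) ≤ s ^ (b - 1) * t ^ (a - 1) := by
        have h1 : t ^ (b - a) ≤ s ^ (b - a) :=
          Real.rpow_le_rpow ht0.le hts (by linarith)
        calc s ^ (a - 1) * t ^ (b - 1)
            = s ^ (a - 1) * (t ^ (a - 1) * t ^ (b - a)) := by
              rw [← Real.rpow_add ht0]; ring_nf
          _ ≤ s ^ (a - 1) * (t ^ (a - 1) * s ^ (b - a)) := by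
              refine mul_le_mul_of_nonneg_left ?_ (Real.rpow_nonneg hs0.le _)
              exact mul_le_mul_of_nonneg_left h1 (Real.rpow_nonneg ht0.le _)
          _ = s ^ (a - 1) * s ^ (b - a) * t ^ (a - 1) := by ring
          _ = s ^ (b - 1) * t ^ (a - 1) := by
              rw [← Real.rpow_add hs0]; ring_nf
      calc Real.exp (-s) * s ^ (a - 1) * (Real.exp (-t) * t ^ (b - 1))
          = (Real.exp (-s) * Real.exp (-t)) * (s ^ (a - 1) * t ^ (b - 1)) := by
            ring
        _ ≤ (Real.exp (-s) * Real.exp (-t)) * (s ^ (b - 1) * t ^ (a - 1)) :=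
            mul_le_mul_of_nonneg_left hkey (by positivity)
        _ = Real.exp (-s) * s ^ (b - 1) * (Real.exp (-t) * t ^ (a - 1)) := by
            ring
  unfold incGamma
  rw [← integral_mul_const, ← integral_mul_const]
  apply setIntegral_mono_on
  · exact (integrableOn_upper a lam ha hlam).mul_const _
  · exact (integrableOn_upper b lam hb hlam).mul_const _
  · exact measurableSet_Ioi
  · exact step

/-- For `λ > 0`, the continuous Poisson CDF `F(x) = Γ(x+1, λ)/Γ(x+1)` is
non-decreasing in `x` on `(-1, ∞)`. -/
theorem contPoisson_cdf_monotone (lam : ℝ) (hlam : 0 < lam) :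
    MonotoneOn (fun x : ℝ => incGamma (x + 1) lam / Real.Gamma (x + 1))
      (Set.Ioi (-1 : ℝ)) := by
  intro x hx y hy hxy
  have hx' : (-1 : ℝ) < x := hx
  have hy' : (-1 : ℝ) < y := hy
  set a := x + 1 with hadef
  set b := y + 1 with hbdef
  have ha : 0 < a := by simp only [hadef]; linarith
  have hb : 0 < b := by simp only [hbdef]; linarith
  have hab : a ≤ b := by simp only [hadef, hbdef]; linarith
  have hGa : 0 < Real.Gamma a := Real.Gamma_pos_of_pos ha
  have hGb : 0 < Real.Gamma b := Real.Gamma_pos_of_pos hb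
  simp only
  rw [div_le_div_iff₀ hGa hGb]
  have hsa := gamma_split a lam ha hlam
  have hsb := gamma_split b lam hb hlam
  rw [hsa, hsb, mul_add, mul_add]
  have hk := key_ineq lam a b hlam ha hab
  have hcomm : incGamma a lam * incGamma b lam = incGamma b lam * incGamma a lam :=
    mul_comm _ _
  linarith
end

section
/- For λ > 0, the function F(x) = Γ(x+1, λ)/Γ(x+1) satisfies F(x) → 0 as x → -1 from above and F(x) → 1 as x → ∞; hence F is the cumulative distribution function of a continuous random variable on (-1, ∞). -/
open MeasureTheory Set Filter

private lemma intOnIoi0 {x : ℝ} (hx : -1 < x) :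
    IntegrableOn (fun s : ℝ => Real.exp (-s) * s ^ x) (Set.Ioi 0) := by
  simpa using Real.GammaIntegral_convergent (show (0:ℝ) < x + 1 by linarith)

private lemma gammaTop : Tendsto Real.Gamma (nhdsWithin 0 (Set.Ioi 0)) atTop := by
  have hc : ContinuousAt Real.Gamma 1 :=
    (Real.differentiableAt_Gamma (fun m => by
      have : (0:ℝ) ≤ m := m.cast_nonneg
      intro h; linarith)).continuousAt
  have hshift : Tendsto (fun y : ℝ => y + 1) (nhdsWithin 0 (Set.Ioi 0)) (nhds 1) := by
    have : Tendsto (fun y : ℝ => y + 1) (nhds 0) (nhds 1) := by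
      simpa using (continuous_add_right (1:ℝ)).tendsto (0:ℝ)
    exact this.mono_left nhdsWithin_le_nhds
  have h1 : Tendsto (fun y : ℝ => Real.Gamma (y + 1)) (nhdsWithin 0 (Set.Ioi 0)) (nhds 1) := by
    simpa [Real.Gamma_one, Function.comp_def] using hc.tendsto.comp hshift
  have h2 : Tendsto (fun y : ℝ => Real.Gamma (y + 1) * y⁻¹) (nhdsWithin 0 (Set.Ioi 0)) atTop :=
    h1.pos_mul_atTop one_pos tendsto_inv_nhdsGT_zero
  refine h2.congr' ?_
  filter_upwards [self_mem_nhdsWithin] with y (hy : (0:ℝ) < y)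
  rw [Real.Gamma_add_one hy.ne']
  field_simp

/-- For `λ > 0`, the function `F(x) = Γ(x+1, λ)/Γ(x+1)` tends to `0` as `x → -1⁺`
and to `1` as `x → ∞`. -/
theorem contPoisson_cdf_limits (lam : ℝ) (hlam : 0 < lam) :
    Tendsto (fun x : ℝ => incGamma (x + 1) lam / Real.Gamma (x + 1))
        (nhdsWithin (-1 : ℝ) (Set.Ioi (-1 : ℝ))) (nhds 0) ∧
      Tendsto (fun x : ℝ => incGamma (x + 1) lam / Real.Gamma (x + 1))
        atTop (nhds 1) := by
  have hinc : ∀ x : ℝ, incGamma (x + 1) lam = ∫ s in Set.Ioi lam, Real.exp (-s) * s ^ x := by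
    intro x; simp [incGamma]
  constructor
  · -- limit at -1⁺
    -- Γ(x+1) → ∞
    have hshift : Tendsto (fun x : ℝ => x + 1) (nhdsWithin (-1) (Set.Ioi (-1)))
        (nhdsWithin 0 (Set.Ioi 0)) := by
      refine tendsto_nhdsWithin_of_tendsto_nhds_of_eventually_within _ ?_ ?_
      · have h : Tendsto (fun x : ℝ => x + 1) (nhds (-1)) (nhds (-1 + 1)) :=
          (continuous_add_right (1:ℝ)).tendsto (-1)
        norm_num at h
        exact h.mono_left nhdsWithin_le_nhds
      · filter_upwards [self_mem_nhdsWithin] with x (hx : -1 < x)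
        simpa using by linarith
    have hGinv : Tendsto (fun x : ℝ => (Real.Gamma (x + 1))⁻¹)
        (nhdsWithin (-1) (Set.Ioi (-1))) (nhds 0) :=
      (gammaTop.comp hshift).inv_tendsto_atTop
    -- incGamma bounded
    set C : ℝ := max 1 lam⁻¹ with hC
    have hC1 : (1:ℝ) ≤ C := le_max_left _ _
    have hbound : ∀ x ∈ Set.Ioo (-1:ℝ) 0, ‖incGamma (x + 1) lam‖ ≤ C * Real.exp (-lam) := by
      intro x hx
      have hxint : IntegrableOn (fun s : ℝ => Real.exp (-s) * s ^ x) (Set.Ioi lam) :=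
        (intOnIoi0 hx.1).mono_set (Set.Ioi_subset_Ioi hlam.le)
      have hnn : 0 ≤ incGamma (x + 1) lam := by
        rw [hinc]
        refine setIntegral_nonneg measurableSet_Ioi fun s hs => ?_
        have hs' : (0:ℝ) < s := hlam.trans hs
        positivity
      rw [Real.norm_eq_abs, abs_of_nonneg hnn, hinc]
      have hgi : IntegrableOn (fun s : ℝ => C * Real.exp (-s)) (Set.Ioi lam) := by
        have := exp_neg_integrableOn_Ioi lam (b := 1) one_pos
        simpa [IntegrableOn] using this.const_mul C
      have hle : ∫ s in Set.Ioi lam, Real.exp (-s) * s ^ x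
          ≤ ∫ s in Set.Ioi lam, C * Real.exp (-s) := by
        refine setIntegral_mono_on hxint hgi measurableSet_Ioi fun s hs => ?_
        have hs' : lam < s := hs
        have hs0 : (0:ℝ) < s := hlam.trans hs'
        have hsx : s ^ x ≤ C := by
          rcases le_or_gt 1 s with h1 | h1
          · exact le_trans (Real.rpow_le_one_of_one_le_of_nonpos h1 hx.2.le) hC1
          · have h2 : s ^ x ≤ s ^ (-1:ℝ) :=
              Real.rpow_le_rpow_of_exponent_ge hs0 h1.le (by linarith [hx.1])
            have h3 : s ^ (-1:ℝ) = s⁻¹ := by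
              rw [Real.rpow_neg_one]
            have h4 : s⁻¹ ≤ lam⁻¹ := by
              exact (inv_anti₀ hlam hs'.le)
            calc s ^ x ≤ s⁻¹ := h3 ▸ h2
              _ ≤ lam⁻¹ := h4
              _ ≤ C := le_max_right _ _
        calc Real.exp (-s) * s ^ x ≤ Real.exp (-s) * C := by
              exact mul_le_mul_of_nonneg_left hsx (Real.exp_nonneg _)
          _ = C * Real.exp (-s) := mul_comm _ _
      calc ∫ s in Set.Ioi lam, Real.exp (-s) * s ^ x
          ≤ ∫ s in Set.Ioi lam, C * Real.exp (-s) := hle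
        _ = C * Real.exp (-lam) := by
            rw [MeasureTheory.integral_const_mul, integral_exp_neg_Ioi]
    have hbd : IsBoundedUnder (· ≤ ·) (nhdsWithin (-1:ℝ) (Set.Ioi (-1)))
        (fun x => ‖incGamma (x + 1) lam‖) := by
      refine isBoundedUnder_of_eventually_le (a := C * Real.exp (-lam)) ?_
      filter_upwards [Ioo_mem_nhdsGT_of_mem (by constructor <;> norm_num : (-1:ℝ) ∈ Set.Ico (-1:ℝ) 0)]
        with x hx
      exact hbound x hx
    have := hGinv.zero_mul_isBoundedUnder_le hbd
    refine this.congr fun x => ?_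
    simp [div_eq_mul_inv, mul_comm]
  · -- limit at +∞
    set M : ℝ := max 1 (2 * lam) with hM
    have hM1 : (1:ℝ) ≤ M := le_max_left _ _
    have hM0 : (0:ℝ) < M := lt_of_lt_of_le one_pos hM1
    have hlamM : lam < M := by
      have : 2 * lam ≤ M := le_max_right _ _
      linarith
    set L : ℝ → ℝ := fun x => ∫ s in Set.Ioc 0 lam, Real.exp (-s) * s ^ x with hL
    -- splitting of Gamma
    have hsplit : ∀ x : ℝ, 0 ≤ x → Real.Gamma (x + 1) = L x + incGamma (x + 1) lam := by
      intro x hx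
      have hx1 : (-1:ℝ) < x := by linarith
      rw [Real.Gamma_eq_integral (by linarith : (0:ℝ) < x + 1)]
      simp only [add_sub_cancel_right]
      rw [hinc]
      have hdis : Disjoint (Set.Ioc 0 lam) (Set.Ioi lam) := Set.Ioc_disjoint_Ioi le_rfl
      have hun : Set.Ioc 0 lam ∪ Set.Ioi lam = Set.Ioi 0 := Set.Ioc_union_Ioi_eq_Ioi hlam.le
      rw [← hun, setIntegral_union hdis measurableSet_Ioi
        ((intOnIoi0 hx1).mono_set Set.Ioc_subset_Ioi_self)
        ((intOnIoi0 hx1).mono_set (Set.Ioi_subset_Ioi hlam.le))]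
    -- bound L x ≤ lam ^ x * lam for x ≥ 0
    have hLbound : ∀ x : ℝ, 0 ≤ x → L x ≤ lam ^ x * lam := by
      intro x hx
      have hx1 : (-1:ℝ) < x := by linarith
      have h1 : L x ≤ ∫ _ in Set.Ioc (0:ℝ) lam, lam ^ x := by
        refine setIntegral_mono_on ((intOnIoi0 hx1).mono_set Set.Ioc_subset_Ioi_self)
          (integrableOn_const (by simp [Real.volume_Ioc])) measurableSet_Ioc
          fun s hs => ?_
        have hs0 : (0:ℝ) < s := hs.1
        calc Real.exp (-s) * s ^ x ≤ 1 * lam ^ x := by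
              refine mul_le_mul ?_ ?_ (by positivity) zero_le_one
              · exact Real.exp_le_one_iff.mpr (by linarith)
              · exact Real.rpow_le_rpow hs0.le hs.2 hx
          _ = lam ^ x := one_mul _
      calc L x ≤ ∫ _ in Set.Ioc (0:ℝ) lam, lam ^ x := h1
        _ = lam ^ x * lam := by
            rw [setIntegral_const, Real.volume_real_Ioc_of_le hlam.le, smul_eq_mul, sub_zero,
              mul_comm]
    -- lower bound for Gamma
    have hGbound : ∀ x : ℝ, 0 ≤ x →
        Real.exp (-(M + 1)) * M ^ x ≤ Real.Gamma (x + 1) := by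
      intro x hx
      have hx1 : (-1:ℝ) < x := by linarith
      rw [Real.Gamma_eq_integral (by linarith : (0:ℝ) < x + 1)]
      simp only [add_sub_cancel_right]
      have hsub : Set.Ioc M (M + 1) ⊆ Set.Ioi 0 := fun s hs => hM0.trans hs.1
      have step1 : Real.exp (-(M + 1)) * M ^ x
          ≤ ∫ s in Set.Ioc M (M + 1), Real.exp (-s) * s ^ x := by
        have h0 : Real.exp (-(M + 1)) * M ^ x
            = ∫ _ in Set.Ioc M (M + 1), Real.exp (-(M + 1)) * M ^ x := by
          rw [setIntegral_const]
          simp [Real.volume_Ioc]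
        rw [h0]
        refine setIntegral_mono_on
          (integrableOn_const (by simp [Real.volume_Ioc]))
          ((intOnIoi0 hx1).mono_set hsub) measurableSet_Ioc fun s hs => ?_
        refine mul_le_mul (Real.exp_le_exp.mpr (by linarith [hs.2]))
          (Real.rpow_le_rpow hM0.le hs.1.le hx) (by positivity) (Real.exp_nonneg _)
      have step2 : ∫ s in Set.Ioc M (M + 1), Real.exp (-s) * s ^ x
          ≤ ∫ s in Set.Ioi 0, Real.exp (-s) * s ^ x := by
        refine setIntegral_mono_set (intOnIoi0 hx1) ?_ (HasSubset.Subset.eventuallyLE hsub)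
        filter_upwards [ae_restrict_mem measurableSet_Ioi] with s hs
        have : (0:ℝ) < s := hs
        positivity
      linarith
    -- L x / Γ(x+1) → 0
    have hquot : Tendsto (fun x : ℝ => L x / Real.Gamma (x + 1)) atTop (nhds 0) := by
      have hub : Tendsto (fun x : ℝ => (lam * Real.exp (M + 1)) * (lam / M) ^ x)
          atTop (nhds 0) := by
        have h := tendsto_rpow_atTop_of_base_lt_one (lam / M)
          (by have : (0:ℝ) < lam / M := by positivity
              linarith)
          ((div_lt_one hM0).mpr hlamM)
        simpa using h.const_mul (lam * Real.exp (M + 1))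
      refine tendsto_of_tendsto_of_tendsto_of_le_of_le' tendsto_const_nhds hub ?_ ?_
      · filter_upwards [eventually_ge_atTop (0:ℝ)] with x hx
        have hΓ : 0 < Real.Gamma (x + 1) := Real.Gamma_pos_of_pos (by linarith)
        have hLnn : 0 ≤ L x := by
          refine setIntegral_nonneg measurableSet_Ioc fun s hs => ?_
          have : (0:ℝ) < s := hs.1
          positivity
        positivity
      · filter_upwards [eventually_ge_atTop (0:ℝ)] with x hx
        have hΓ : 0 < Real.Gamma (x + 1) := Real.Gamma_pos_of_pos (by linarith)
        have h1 : L x ≤ lam ^ x * lam := hLbound x hx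
        have h2 : Real.exp (-(M + 1)) * M ^ x ≤ Real.Gamma (x + 1) := hGbound x hx
        have hMx : (0:ℝ) < M ^ x := Real.rpow_pos_of_pos hM0 x
        have hden : (0:ℝ) < Real.exp (-(M + 1)) * M ^ x := by positivity
        calc L x / Real.Gamma (x + 1) ≤ (lam ^ x * lam) / (Real.exp (-(M + 1)) * M ^ x) := by
              exact div_le_div₀ (by positivity) h1 hden h2
          _ = (lam * Real.exp (M + 1)) * (lam / M) ^ x := by
              rw [Real.div_rpow hlam.le hM0.le, Real.exp_neg]
              field_simp
      
    have : Tendsto (fun x : ℝ => 1 - L x / Real.Gamma (x + 1)) atTop (nhds 1) := by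
      simpa using tendsto_const_nhds.sub hquot
    refine this.congr' ?_
    filter_upwards [eventually_ge_atTop (0:ℝ)] with x hx
    have hΓ : 0 < Real.Gamma (x + 1) := Real.Gamma_pos_of_pos (by linarith)
    have hne : Real.Gamma (x + 1) ≠ 0 := hΓ.ne'
    rw [eq_div_iff hne, sub_mul, one_mul, div_mul_cancel₀ _ hne, hsplit x hx]
    ring
end

section
/- For fixed s > -1 and λ > 0, let F_Y^{(n)}(x) = B(x+1, n-x, p_n)/B(x+1, n-x) be the Continuous Binomial CDF with parameters n and p_n, where n p_n → λ as n → ∞ and p_n → 0. Then F_Y^{(n)}(s) → Γ(s+1, λ)/Γ(s+1), the Continuous Poisson CDF, as n → ∞. -/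
open MeasureTheory Set Filter

/-- Complete Beta function `B(a,b) = ∫_0^1 t^{a-1}(1-t)^{b-1} dt`. -/
noncomputable def betaFun (a b : ℝ) : ℝ :=
  ∫ t in Set.Ioo (0 : ℝ) 1, t ^ (a - 1) * (1 - t) ^ (b - 1)

/-- Upper incomplete Beta function `B(a,b,x) = ∫_x^1 t^{a-1}(1-t)^{b-1} dt`. -/
noncomputable def betaInc (a b x : ℝ) : ℝ :=
  ∫ t in Set.Ioo x (1 : ℝ), t ^ (a - 1) * (1 - t) ^ (b - 1)

lemma aux_subst (s c : ℝ) {n x : ℝ} (hn : 0 < n) (hx0 : 0 ≤ x) (hx1 : x ≤ 1) :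
    ∫ u in Ioo (n*x) n, u ^ s * (1 - u/n) ^ c
      = n ^ (s+1) * ∫ t in Ioo x 1, t ^ s * (1 - t) ^ c := by
  have hnx : n * x ≤ n := by nlinarith
  rw [← integral_Ioc_eq_integral_Ioo, ← integral_Ioc_eq_integral_Ioo,
    ← intervalIntegral.integral_of_le hnx, ← intervalIntegral.integral_of_le hx1]
  have key := intervalIntegral.smul_integral_comp_mul_left (a := x) (b := 1)
    (fun u => u ^ s * (1 - u/n) ^ c) n
  rw [mul_one] at key
  rw [← key]
  have hcongr : (∫ t in x..1, (n*t) ^ s * (1-(n*t)/n) ^ c)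
      = ∫ t in x..1, n ^ s * (t ^ s * (1-t) ^ c) := by
    apply intervalIntegral.integral_congr
    intro t ht
    rw [uIcc_of_le hx1] at ht
    have ht0 : 0 ≤ t := le_trans hx0 ht.1
    show (n*t) ^ s * (1 - n*t/n) ^ c = n ^ s * (t ^ s * (1-t) ^ c)
    rw [mul_div_cancel_left₀ _ hn.ne', Real.mul_rpow hn.le ht0, mul_assoc]
  rw [hcongr, intervalIntegral.integral_const_mul, smul_eq_mul,
    Real.rpow_add_one hn.ne']
  ring

lemma aux_ptwise (s u : ℝ) (hu : 0 < u) :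
    Tendsto (fun n : ℕ => (1 - u/(n:ℝ)) ^ ((n:ℝ) - s - 1)) atTop (nhds (Real.exp (-u))) := by
  have hN : Tendsto (fun n : ℕ => (n:ℝ)) atTop atTop := tendsto_natCast_atTop_atTop
  have hev : ∀ᶠ n : ℕ in atTop, u < (n:ℝ) ∧ (0:ℝ) < (n:ℝ) := by
    filter_upwards [hN.eventually_gt_atTop u, hN.eventually_gt_atTop 0] with n h1 h2
    exact ⟨h1, h2⟩
  have h1 : Tendsto (fun n : ℕ => (n:ℝ) * Real.log (1 + (-u)/(n:ℝ))) atTop (nhds (-u)) :=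
    (Real.tendsto_mul_log_one_add_div_atTop (-u)).comp hN
  have h2 : Tendsto (fun n : ℕ => ((n:ℝ) - s - 1)/(n:ℝ)) atTop (nhds 1) := by
    have heq : (fun n : ℕ => (1:ℝ) - (s+1)/(n:ℝ)) =ᶠ[atTop]
        (fun n : ℕ => ((n:ℝ) - s - 1)/(n:ℝ)) := by
      filter_upwards [hN.eventually_gt_atTop 0] with n hn
      field_simp
      ring
    have : Tendsto (fun n : ℕ => (1:ℝ) - (s+1)/(n:ℝ)) atTop (nhds (1 - 0)) :=
      tendsto_const_nhds.sub (Tendsto.div_atTop tendsto_const_nhds hN)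
    rw [sub_zero] at this
    exact this.congr' heq
  have h3 : Tendsto (fun n : ℕ => Real.log (1 - u/(n:ℝ)) * ((n:ℝ) - s - 1)) atTop
      (nhds (-u)) := by
    have hmul := h1.mul h2
    rw [mul_one] at hmul
    apply hmul.congr'
    filter_upwards [hev] with n ⟨hn1, hn2⟩
    have hne : (n:ℝ) ≠ 0 := hn2.ne'
    rw [show (1:ℝ) + -u/(n:ℝ) = 1 - u/(n:ℝ) by ring]
    field_simp
  have h4 := (Real.continuous_exp.tendsto _).comp h3
  apply h4.congr'
  filter_upwards [hev] with n ⟨hn1, hn2⟩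
  have hpos : 0 < 1 - u/(n:ℝ) := by
    rw [sub_pos]
    exact (div_lt_one hn2).2 hn1
  rw [Function.comp_apply, Real.rpow_def_of_pos hpos]

lemma aux_bound (s : ℝ) {n u : ℝ} (hs : -1 < s) (hn : 2*s + 2 ≤ n) (hn0 : 0 < n)
    (hu : u ∈ Ioo 0 n) :
    u ^ s * (1 - u/n) ^ (n - s - 1) ≤ u ^ s * Real.exp (-(1/2) * u) := by
  obtain ⟨hu0, hun⟩ := hu
  have h1 : 0 < 1 - u / n := by
    rw [sub_pos]; exact (div_lt_one hn0).2 hun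
  have hlog : Real.log (1 - u/n) ≤ -(u/n) := by
    have := Real.log_le_sub_one_of_pos h1; linarith
  have hc : 0 ≤ n - s - 1 := by linarith
  apply mul_le_mul_of_nonneg_left _ (Real.rpow_nonneg hu0.le s)
  rw [Real.rpow_def_of_pos h1]
  apply Real.exp_le_exp.2
  have hstep : Real.log (1 - u/n) * (n-s-1) ≤ (-(u/n)) * (n-s-1) :=
    mul_le_mul_of_nonneg_right hlog hc
  refine hstep.trans ?_
  rw [neg_mul, neg_mul, neg_le_neg_iff,
    show u / n * (n - s - 1) = u * (n-s-1) / n by ring, le_div_iff₀ hn0]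
  nlinarith [mul_nonneg hu0.le (by linarith : (0:ℝ) ≤ n - 2*s - 2)]

/-- Poisson limit of the Continuous Binomial: if `n pₙ → λ` and `pₙ → 0`, then
`F_Y^{(n)}(s) = B(s+1, n-s, pₙ)/B(s+1, n-s) → Γ(s+1, λ)/Γ(s+1)`. -/
theorem contBinomial_tendsto_contPoisson (s lam : ℝ) (hs : -1 < s) (hlam : 0 < lam)
    (p : ℕ → ℝ) (hp01 : ∀ n, p n ∈ Set.Ioo (0 : ℝ) 1)
    (hnp : Tendsto (fun n : ℕ => (n : ℝ) * p n) atTop (nhds lam))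
    (hp0 : Tendsto p atTop (nhds 0)) :
    Tendsto (fun n : ℕ => betaInc (s + 1) ((n : ℝ) - s) (p n) / betaFun (s + 1) ((n : ℝ) - s))
      atTop (nhds (incGamma (s + 1) lam / Real.Gamma (s + 1))) := by
  set μ : Measure ℝ := volume.restrict (Ioi 0) with hμ
  set φ : ℕ → ℝ → ℝ := fun n u => u ^ s * (1 - u / (n:ℝ)) ^ ((n:ℝ) - s - 1) with hφ
  set F : ℕ → ℝ → ℝ := fun n => (Ioo ((n:ℝ) * p n) (n:ℝ)).indicator (φ n) with hF
  set G : ℕ → ℝ → ℝ := fun n => (Ioo (0:ℝ) (n:ℝ)).indicator (φ n) with hG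
  set f : ℝ → ℝ := fun u => u ^ s * Real.exp (-u) with hf
  set bound : ℝ → ℝ := fun u => u ^ s * Real.exp (-(1/2) * u) with hbound
  have hN : Tendsto (fun n : ℕ => (n:ℝ)) atTop atTop := tendsto_natCast_atTop_atTop
  have hmeas : ∀ n : ℕ, Measurable (φ n) := fun n => by fun_prop
  have hbound_int : Integrable bound μ := by
    have h := integrableOn_rpow_mul_exp_neg_mul_rpow (p := 1) (b := 1/2) hs zero_lt_one (by norm_num)
    simpa [hbound, hμ, IntegrableOn, Real.rpow_one] using h
  have hbound_nonneg : ∀ u ∈ Ioi (0:ℝ), 0 ≤ bound u := fun u hu =>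
    mul_nonneg (Real.rpow_nonneg (le_of_lt hu) s) (Real.exp_nonneg _)
  have hΓpos : 0 < Real.Gamma (s+1) := Real.Gamma_pos_of_pos (by linarith)
  have hne : ∀ᵐ u ∂μ, u ≠ lam := by
    apply ae_restrict_of_ae
    have hset : {u : ℝ | ¬ u ≠ lam} = {lam} := by ext u; simp
    rw [ae_iff, hset]
    exact measure_singleton lam
  -- common hypotheses for dominated convergence
  have hmeasF : ∀ᶠ n : ℕ in atTop, AEStronglyMeasurable (F n) μ :=
    Eventually.of_forall fun n =>
      ((hmeas n).indicator measurableSet_Ioo).aestronglyMeasurable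
  have hmeasG : ∀ᶠ n : ℕ in atTop, AEStronglyMeasurable (G n) μ :=
    Eventually.of_forall fun n =>
      ((hmeas n).indicator measurableSet_Ioo).aestronglyMeasurable
  have hφnn : ∀ (n : ℕ) (u : ℝ), u ∈ Ioo (0:ℝ) (n:ℝ) → 0 ≤ φ n u := by
    intro n u hu
    exact mul_nonneg (Real.rpow_nonneg hu.1.le s)
      (Real.rpow_nonneg (by rw [sub_nonneg]; exact (div_le_one (lt_of_le_of_lt hu.1.le hu.2)).2 hu.2.le) _)
  have hboundF : ∀ᶠ n : ℕ in atTop, ∀ᵐ u ∂μ, ‖F n u‖ ≤ bound u := by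
    filter_upwards [hN.eventually_ge_atTop (2*s+2), hN.eventually_gt_atTop 0] with n h1 h2
    refine (ae_restrict_mem measurableSet_Ioi).mono fun u hu => ?_
    by_cases hmem : u ∈ Ioo ((n:ℝ) * p n) (n:ℝ)
    · have hu' : u ∈ Ioo (0:ℝ) (n:ℝ) := ⟨hu, hmem.2⟩
      rw [show F n u = φ n u from indicator_of_mem hmem _,
        Real.norm_of_nonneg (hφnn n u hu')]
      exact aux_bound s hs h1 h2 hu'
    · rw [show F n u = 0 from indicator_of_notMem hmem _, norm_zero]
      exact hbound_nonneg u hu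
  have hboundG : ∀ᶠ n : ℕ in atTop, ∀ᵐ u ∂μ, ‖G n u‖ ≤ bound u := by
    filter_upwards [hN.eventually_ge_atTop (2*s+2), hN.eventually_gt_atTop 0] with n h1 h2
    refine (ae_restrict_mem measurableSet_Ioi).mono fun u hu => ?_
    by_cases hmem : u ∈ Ioo (0:ℝ) (n:ℝ)
    · rw [show G n u = φ n u from indicator_of_mem hmem _,
        Real.norm_of_nonneg (hφnn n u hmem)]
      exact aux_bound s hs h1 h2 hmem
    · rw [show G n u = 0 from indicator_of_notMem hmem _, norm_zero]
      exact hbound_nonneg u hu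
  have hlimF : ∀ᵐ u ∂μ, Tendsto (fun n => F n u) atTop (nhds ((Ioi lam).indicator f u)) := by
    filter_upwards [ae_restrict_mem measurableSet_Ioi, hne] with u hu hune
    rcases lt_or_gt_of_ne hune with hlt | hgt
    · have hev : (fun n : ℕ => F n u) =ᶠ[atTop] fun _ => (0:ℝ) := by
        filter_upwards [hnp.eventually_const_lt hlt] with n hn
        exact indicator_of_notMem (fun hmem => absurd hmem.1 (not_lt.2 hn.le)) _
      rw [indicator_of_notMem (by simpa using hlt.le) ]
      exact tendsto_const_nhds.congr' hev.symm
    · have hev : (fun n : ℕ => F n u) =ᶠ[atTop] fun n => φ n u := by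
        filter_upwards [hnp.eventually_lt_const hgt, hN.eventually_gt_atTop u] with n ha hb
        exact indicator_of_mem (show u ∈ Ioo ((n:ℝ) * p n) (n:ℝ) from ⟨ha, hb⟩) _
      have hlim : Tendsto (fun n : ℕ => φ n u) atTop (nhds (f u)) :=
        tendsto_const_nhds.mul (aux_ptwise s u hu)
      rw [indicator_of_mem (show u ∈ Ioi lam from hgt)]
      exact hlim.congr' hev.symm
  have hlimG : ∀ᵐ u ∂μ, Tendsto (fun n => G n u) atTop (nhds ((Ioi (0:ℝ)).indicator f u)) := by
    filter_upwards [ae_restrict_mem measurableSet_Ioi] with u hu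
    have hev : (fun n : ℕ => G n u) =ᶠ[atTop] fun n => φ n u := by
      filter_upwards [hN.eventually_gt_atTop u] with n hb
      exact indicator_of_mem (show u ∈ Ioo (0:ℝ) (n:ℝ) from ⟨hu, hb⟩) _
    have hlim : Tendsto (fun n : ℕ => φ n u) atTop (nhds (f u)) :=
      tendsto_const_nhds.mul (aux_ptwise s u hu)
    rw [indicator_of_mem hu]
    exact hlim.congr' hev.symm
  have hintF : Tendsto (fun n => ∫ u, F n u ∂μ) atTop
      (nhds (∫ u, (Ioi lam).indicator f u ∂μ)) :=
    tendsto_integral_filter_of_dominated_convergence bound hmeasF hboundF hbound_int hlimF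
  have hintG : Tendsto (fun n => ∫ u, G n u ∂μ) atTop
      (nhds (∫ u, (Ioi (0:ℝ)).indicator f u ∂μ)) :=
    tendsto_integral_filter_of_dominated_convergence bound hmeasG hboundG hbound_int hlimG
  have hIG : ∫ u, (Ioi lam).indicator f u ∂μ = incGamma (s+1) lam := by
    rw [hμ, integral_indicator measurableSet_Ioi, Measure.restrict_restrict measurableSet_Ioi,
      inter_eq_left.2 (Ioi_subset_Ioi hlam.le)]
    unfold incGamma
    simp only [add_sub_cancel_right]
    exact setIntegral_congr_fun measurableSet_Ioi fun u _ => mul_comm _ _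
  have hΓ : ∫ u, (Ioi (0:ℝ)).indicator f u ∂μ = Real.Gamma (s+1) := by
    rw [hμ, integral_indicator measurableSet_Ioi, Measure.restrict_restrict measurableSet_Ioi,
      inter_self, Real.Gamma_eq_integral (by linarith : (0:ℝ) < s+1)]
    simp only [add_sub_cancel_right]
    exact setIntegral_congr_fun measurableSet_Ioi fun u _ => mul_comm _ _
  rw [hIG] at hintF
  rw [hΓ] at hintG
  have hdiv := hintF.div hintG (ne_of_gt hΓpos)
  apply hdiv.congr'
  filter_upwards [eventually_ge_atTop 1] with n hn1
  have hn0 : (0:ℝ) < (n:ℝ) := by exact_mod_cast hn1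
  have e1 : ∫ u, F n u ∂μ = (n:ℝ)^(s+1) * betaInc (s+1) ((n:ℝ)-s) (p n) := by
    have hsub : Ioo ((n:ℝ) * p n) (n:ℝ) ⊆ Ioi 0 := fun u hu =>
      lt_of_le_of_lt (mul_nonneg (Nat.cast_nonneg n) (hp01 n).1.le) hu.1
    rw [hμ, integral_indicator measurableSet_Ioo, Measure.restrict_restrict measurableSet_Ioo,
      inter_eq_left.2 hsub, aux_subst s ((n:ℝ)-s-1) hn0 (hp01 n).1.le (hp01 n).2.le]
    unfold betaInc
    simp only [add_sub_cancel_right]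
  have e2 : ∫ u, G n u ∂μ = (n:ℝ)^(s+1) * betaFun (s+1) ((n:ℝ)-s) := by
    have hsub : Ioo (0:ℝ) (n:ℝ) ⊆ Ioi 0 := fun u hu => hu.1
    have haux := aux_subst s ((n:ℝ)-s-1) (x := 0) hn0 le_rfl zero_le_one
    rw [mul_zero] at haux
    rw [hμ, integral_indicator measurableSet_Ioo, Measure.restrict_restrict measurableSet_Ioo,
      inter_eq_left.2 hsub, haux]
    unfold betaFun
    simp only [add_sub_cancel_right]
  rw [Pi.div_apply, e1, e2, mul_div_mul_left _ _ (ne_of_gt (Real.rpow_pos_of_pos hn0 (s+1)))]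
end

section
/- For fixed s > -1 and λ > 0, let F_Z^{(r)}(x) = B(x+1, r, p_r)/B(x+1, r) be the Continuous Negative Binomial CDF with parameters r and p_r, where r p_r → λ as r → ∞ and p_r → 0. Then F_Z^{(r)}(s) → Γ(s+1, λ)/Γ(s+1), the Continuous Poisson CDF. -/
open MeasureTheory Set Filter

lemma aux_pow_limit (u : ℝ) :
    Tendsto (fun r : ℕ => (1 - u / (r:ℝ)) ^ ((r:ℝ) - 1)) atTop (nhds (Real.exp (-u))) := by
  have h1 : Tendsto (fun r : ℕ => (1 + (-u) / (r:ℝ)) ^ ((r:ℝ))) atTop (nhds (Real.exp (-u))) :=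
    (Real.tendsto_one_add_div_rpow_exp (-u)).comp tendsto_natCast_atTop_atTop
  have h2 : Tendsto (fun r : ℕ => (1 + (-u) / (r:ℝ))) atTop (nhds 1) := by
    have := (tendsto_const_div_atTop_nhds_zero_nat (-u)).const_add 1
    simpa using this
  have h3 := h1.div h2 one_ne_zero
  rw [div_one] at h3
  apply h3.congr'
  filter_upwards [h2.eventually (eventually_gt_nhds (by norm_num : (0:ℝ) < 1))] with r hr
  simp only [Pi.div_apply]
  rw [sub_eq_add_neg (1:ℝ), ← neg_div, Real.rpow_sub hr, Real.rpow_one]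


lemma aux_key (a : ℝ) (ha : 0 < a) (c : ℝ) (hc : 0 ≤ c) (q : ℕ → ℝ)
    (hq0 : ∀ r, 0 ≤ q r)
    (hqc : Tendsto (fun r : ℕ => (r:ℝ) * q r) atTop (nhds c)) :
    Tendsto (fun r : ℕ => ∫ u in Set.Ioo ((r:ℝ) * q r) (r:ℝ),
        u ^ (a-1) * (1 - u/(r:ℝ)) ^ ((r:ℝ)-1)) atTop
      (nhds (∫ u in Set.Ioi c, u ^ (a-1) * Real.exp (-u))) := by
  set μ := (volume : Measure ℝ).restrict (Set.Ioi (0:ℝ)) with hμ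
  set F : ℕ → ℝ → ℝ := fun r u => (Set.Ioo ((r:ℝ)*q r) (r:ℝ)).indicator
      (fun u => u ^ (a-1) * (1 - u/(r:ℝ)) ^ ((r:ℝ)-1)) u with hF
  set f : ℝ → ℝ := fun u => (Set.Ioi c).indicator (fun u => u ^ (a-1) * Real.exp (-u)) u with hf
  have hFint : ∀ r : ℕ, ∫ u, F r u ∂μ
      = ∫ u in Set.Ioo ((r:ℝ) * q r) (r:ℝ), u ^ (a-1) * (1 - u/(r:ℝ)) ^ ((r:ℝ)-1) := by
    intro r
    have hsub : Set.Ioo ((r:ℝ)*q r) (r:ℝ) ⊆ Set.Ioi 0 := fun u hu =>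
      lt_of_le_of_lt (mul_nonneg (Nat.cast_nonneg r) (hq0 r)) hu.1
    rw [hF, integral_indicator measurableSet_Ioo, hμ,
      Measure.restrict_restrict measurableSet_Ioo, Set.inter_eq_left.2 hsub]
  have hfint : ∫ u, f u ∂μ = ∫ u in Set.Ioi c, u ^ (a-1) * Real.exp (-u) := by
    have hsub : Set.Ioi c ⊆ Set.Ioi (0:ℝ) := fun u hu => lt_of_le_of_lt hc hu
    rw [hf, integral_indicator measurableSet_Ioi, hμ,
      Measure.restrict_restrict measurableSet_Ioi, Set.inter_eq_left.2 hsub]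
  rw [← hfint]
  have key : Tendsto (fun r : ℕ => ∫ u, F r u ∂μ) atTop (nhds (∫ u, f u ∂μ)) := by
    apply tendsto_integral_filter_of_dominated_convergence
      (fun u => u ^ (a-1) * Real.exp (-(u/2)))
    · filter_upwards with r
      apply Measurable.aestronglyMeasurable
      apply Measurable.indicator _ measurableSet_Ioo
      fun_prop
    · filter_upwards [eventually_ge_atTop 2] with r hr2
      rw [ae_restrict_iff' measurableSet_Ioi]
      filter_upwards with u hu0
      have hu : (0:ℝ) < u := hu0
      have hrpos : (0:ℝ) < (r:ℝ) := by
        have : (0:ℕ) < r := by omega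
        exact_mod_cast this
      by_cases hmem : u ∈ Set.Ioo ((r:ℝ)*q r) (r:ℝ)
      · rw [hF]
        simp only [Set.indicator_of_mem hmem]
        have h1 : 0 < 1 - u/(r:ℝ) := by
          rw [sub_pos, div_lt_one hrpos]; exact hmem.2
        have hr2' : (2:ℝ) ≤ (r:ℝ) := by exact_mod_cast hr2
        have hub : u ^ (a-1) * (1 - u/(r:ℝ)) ^ ((r:ℝ)-1) ≤ u ^ (a-1) * Real.exp (-(u/2)) := by
          apply mul_le_mul_of_nonneg_left _ (Real.rpow_nonneg hu.le _)
          rw [Real.rpow_def_of_pos h1, Real.exp_le_exp]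
          have hlog : Real.log (1 - u/(r:ℝ)) ≤ -(u/(r:ℝ)) := by
            have := Real.log_le_sub_one_of_pos h1
            linarith
          have h2 : ((r:ℝ)-1) * Real.log (1 - u/(r:ℝ)) ≤ ((r:ℝ)-1) * (-(u/(r:ℝ))) :=
            mul_le_mul_of_nonneg_left hlog (by linarith)
          have e : ((r:ℝ)-1) * (-(u/(r:ℝ))) = -(u * (((r:ℝ)-1)/(r:ℝ))) := by ring
          have h4 : (1:ℝ)/2 ≤ ((r:ℝ)-1)/(r:ℝ) := by
            rw [le_div_iff₀ hrpos]; linarith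
          have h5 : u * ((1:ℝ)/2) ≤ u * (((r:ℝ)-1)/(r:ℝ)) :=
            mul_le_mul_of_nonneg_left h4 hu.le
          rw [e] at h2
          linarith
        rw [Real.norm_eq_abs, abs_of_nonneg (by positivity)]
        exact hub
      · rw [hF]
        simp only [Set.indicator_of_notMem hmem, norm_zero]
        positivity
    · have h : IntegrableOn (fun x : ℝ => x ^ (a-1) * Real.exp (-(1/2) * x ^ (1:ℝ)))
          (Set.Ioi 0) := integrableOn_rpow_mul_exp_neg_mul_rpow (by linarith) zero_lt_one (by norm_num)
      apply h.congr_fun _ measurableSet_Ioi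
      intro x hx
      show x ^ (a-1) * Real.exp (-(1/2) * x ^ (1:ℝ)) = x ^ (a-1) * Real.exp (-(x/2))
      rw [Real.rpow_one]
      ring_nf
    · have h0 : ∀ᵐ (u : ℝ), u ≠ c := by
        simp only [ae_iff, not_not]
        exact measure_singleton c
      filter_upwards [ae_restrict_of_ae h0, ae_restrict_mem measurableSet_Ioi] with u huc hu0
      rcases lt_or_gt_of_ne huc with hlt | hgt
      · have hfu : f u = 0 := by
          rw [hf]; exact Set.indicator_of_notMem (by simp [hlt.not_gt]) _
        rw [hfu]
        apply Tendsto.congr' _ tendsto_const_nhds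
        filter_upwards [hqc.eventually (eventually_gt_nhds hlt)] with r hr
        rw [hF]
        exact (Set.indicator_of_notMem (fun hmem => absurd hmem.1 (not_lt.2 hr.le)) _).symm
      · have hfu : f u = u ^ (a-1) * Real.exp (-u) := by
          rw [hf]; exact Set.indicator_of_mem hgt _
        rw [hfu]
        apply Tendsto.congr' _ (tendsto_const_nhds.mul (aux_pow_limit u))
        filter_upwards [hqc.eventually (eventually_lt_nhds hgt),
          tendsto_natCast_atTop_atTop.eventually_gt_atTop u] with r hr1 hr2
        rw [hF]
        have hmem : u ∈ Set.Ioo ((r:ℝ)*q r) (r:ℝ) := Set.mem_Ioo.mpr ⟨hr1, hr2⟩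
        simp only []
        rw [Set.indicator_of_mem hmem]
  exact key.congr hFint

lemma aux_cov (a : ℝ) (r : ℕ) (hr : 1 ≤ r) (q : ℝ) (hq0 : 0 ≤ q) (hq1 : q < 1) :
    (r:ℝ) ^ a * ∫ t in Set.Ioo q 1, t ^ (a-1) * (1 - t) ^ ((r:ℝ)-1)
      = ∫ u in Set.Ioo ((r:ℝ)*q) (r:ℝ), u ^ (a-1) * (1 - u/(r:ℝ)) ^ ((r:ℝ)-1) := by
  have hrpos : (0:ℝ) < (r:ℝ) := by exact_mod_cast hr
  have hrne : (r:ℝ) ≠ 0 := hrpos.ne'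
  have hra : (0:ℝ) < (r:ℝ) ^ (a-1) := Real.rpow_pos_of_pos hrpos _
  have step1 : ∫ u in Set.Ioo ((r:ℝ)*q) (r:ℝ), u ^ (a-1) * (1 - u/(r:ℝ)) ^ ((r:ℝ)-1)
      = ∫ u in Set.Ioo ((r:ℝ)*q) (r:ℝ),
        (r:ℝ) ^ (a-1) * ((u/(r:ℝ)) ^ (a-1) * (1 - u/(r:ℝ)) ^ ((r:ℝ)-1)) := by
    apply setIntegral_congr_fun measurableSet_Ioo
    intro u hu
    have hu0 : 0 < u := lt_of_le_of_lt (mul_nonneg hrpos.le hq0) hu.1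
    simp only []
    rw [Real.div_rpow hu0.le hrpos.le]
    field_simp
  have step2 : ∫ u in Set.Ioo ((r:ℝ)*q) (r:ℝ), (u/(r:ℝ)) ^ (a-1) * (1 - u/(r:ℝ)) ^ ((r:ℝ)-1)
      = (r:ℝ) * ∫ t in Set.Ioo q 1, t ^ (a-1) * (1 - t) ^ ((r:ℝ)-1) := by
    have hle : (r:ℝ)*q ≤ (r:ℝ) := by nlinarith
    rw [← integral_Ioc_eq_integral_Ioo, ← intervalIntegral.integral_of_le hle,
      intervalIntegral.integral_comp_div (fun t => t ^ (a-1) * (1 - t) ^ ((r:ℝ)-1)) hrne,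
      mul_div_cancel_left₀ _ hrne, div_self hrne, smul_eq_mul,
      intervalIntegral.integral_of_le hq1.le, integral_Ioc_eq_integral_Ioo]
  rw [step1, MeasureTheory.integral_const_mul, step2, ← mul_assoc, ← Real.rpow_add_one hrne, sub_add_cancel]

theorem contNegBinomial_tendsto_contPoisson' (s lam : ℝ) (hs : -1 < s) (hlam : 0 < lam)
    (p : ℕ → ℝ) (hp01 : ∀ r, p r ∈ Set.Ioo (0 : ℝ) 1)
    (hrp : Tendsto (fun r : ℕ => (r : ℝ) * p r) atTop (nhds lam))
    (hp0 : Tendsto p atTop (nhds 0)) :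
    Tendsto (fun r : ℕ => (∫ t in Set.Ioo (p r) (1:ℝ), t ^ (s+1-1) * (1-t) ^ ((r:ℝ)-1)) /
        ∫ t in Set.Ioo (0:ℝ) (1:ℝ), t ^ (s+1-1) * (1-t) ^ ((r:ℝ)-1))
      atTop (nhds ((∫ u in Set.Ioi lam, Real.exp (-u) * u ^ (s+1-1)) / Real.Gamma (s + 1))) := by
  have ha : 0 < s + 1 := by linarith
  have hnum := aux_key (s+1) ha lam hlam.le p (fun r => (hp01 r).1.le) hrp
  have hden := aux_key (s+1) ha 0 le_rfl (fun _ => 0) (fun _ => le_rfl)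
    (by simp only [mul_zero]; exact tendsto_const_nhds)
  simp only [mul_zero] at hden
  have hG : Real.Gamma (s+1) = ∫ u in Set.Ioi (0:ℝ), u ^ (s+1-1) * Real.exp (-u) := by
    rw [Real.Gamma_eq_integral ha]
    exact setIntegral_congr_fun measurableSet_Ioi fun x hx => mul_comm _ _
  have hI : (∫ u in Set.Ioi lam, Real.exp (-u) * u ^ (s+1-1))
      = ∫ u in Set.Ioi lam, u ^ (s+1-1) * Real.exp (-u) :=
    setIntegral_congr_fun measurableSet_Ioi fun x hx => mul_comm _ _
  have hGne : (∫ u in Set.Ioi (0:ℝ), u ^ (s+1-1) * Real.exp (-u)) ≠ 0 := by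
    rw [← hG]; exact (Real.Gamma_pos_of_pos ha).ne'
  have hdiv := hnum.div hden hGne
  rw [hI, hG]
  apply hdiv.congr'
  filter_upwards [eventually_ge_atTop 1] with r hr
  have hrpos : (0:ℝ) < (r:ℝ) := by exact_mod_cast hr
  have h1 := aux_cov (s+1) r hr (p r) (hp01 r).1.le (hp01 r).2
  have h2 := aux_cov (s+1) r hr 0 le_rfl zero_lt_one
  rw [mul_zero] at h2
  simp only [Pi.div_apply]
  rw [← h1, ← h2]
  exact mul_div_mul_left _ _ (Real.rpow_pos_of_pos hrpos _).ne'


/-- Poisson limit of the Continuous Negative Binomial: if `r pᵣ → λ` and `pᵣ → 0`, then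
`F_Z^{(r)}(s) = B(s+1, r, pᵣ)/B(s+1, r) → Γ(s+1, λ)/Γ(s+1)`. -/
theorem contNegBinomial_tendsto_contPoisson (s lam : ℝ) (hs : -1 < s) (hlam : 0 < lam)
    (p : ℕ → ℝ) (hp01 : ∀ r, p r ∈ Set.Ioo (0 : ℝ) 1)
    (hrp : Tendsto (fun r : ℕ => (r : ℝ) * p r) atTop (nhds lam))
    (hp0 : Tendsto p atTop (nhds 0)) :
    Tendsto (fun r : ℕ => betaInc (s + 1) (r : ℝ) (p r) / betaFun (s + 1) (r : ℝ))
      atTop (nhds (incGamma (s + 1) lam / Real.Gamma (s + 1))) := by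
  exact contNegBinomial_tendsto_contPoisson' s lam hs hlam p hp01 hrp hp0
end

section
/- If U is uniformly distributed on (0,1) and Y* is an integer-valued random variable independent of U, then for the jittered variable Y = Y* + U - 1 and every α ∈ (0,1), the quantiles satisfy Q_α(Y*) = ⌈Q_α(Y)⌉ whenever Q_α(Y) is not an integer, where Q_α denotes the α-quantile (generalized inverse of the CDF). -/
open MeasureTheory Set ProbabilityTheory

/-- The `α`-quantile `Q_α(W) = inf {w : P(W ≤ w) ≥ α}`. -/
noncomputable def quantile {Ω : Type*} [MeasurableSpace Ω] (μ : Measure Ω)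
    (W : Ω → ℝ) (α : ℝ) : ℝ :=
  sInf {w : ℝ | ENNReal.ofReal α ≤ μ {ω | W ω ≤ w}}

/-- Jittering: if `U ~ Uniform(0,1)` is independent of the integer-valued `Y*`
and `Y = Y* + U - 1`, then for every `α ∈ (0,1)`, whenever `Q_α(Y)` is not an
integer, `Q_α(Y*) = ⌈Q_α(Y)⌉`. -/
theorem jittered_quantile_eq_ceil
    {Ω : Type*} [MeasurableSpace Ω] (μ : Measure Ω) [IsProbabilityMeasure μ]
    (Ystar : Ω → ℤ) (U : Ω → ℝ)
    (hYmeas : Measurable fun ω => (Ystar ω : ℝ)) (hUmeas : Measurable U)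
    (hU : Measure.map U μ = volume.restrict (Set.Ioo (0 : ℝ) 1))
    (hindep : IndepFun (fun ω => (Ystar ω : ℝ)) U μ)
    (α : ℝ) (hα : α ∈ Set.Ioo (0 : ℝ) 1)
    (hnotint : quantile μ (fun ω => (Ystar ω : ℝ) + U ω - 1) α ∉
      Set.range (Int.cast : ℤ → ℝ)) :
    quantile μ (fun ω => (Ystar ω : ℝ)) α =
      (⌈quantile μ (fun ω => (Ystar ω : ℝ) + U ω - 1) α⌉ : ℝ) := by
  classical
  obtain ⟨hα0, hα1⟩ := hα
  set Y : Ω → ℝ := fun ω => (Ystar ω : ℝ) + U ω - 1 with hYdef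
  -- the set where U ∈ (0,1) has full measure
  have hAmeas : MeasurableSet (U ⁻¹' Set.Ioo (0:ℝ) 1) := hUmeas measurableSet_Ioo
  have hA : μ (U ⁻¹' Set.Ioo (0:ℝ) 1) = 1 := by
    rw [← Measure.map_apply hUmeas measurableSet_Ioo, hU,
      Measure.restrict_apply_self, Real.volume_Ioo]
    simp
  have hAc : μ (U ⁻¹' Set.Ioo (0:ℝ) 1)ᶜ = 0 := by
    rw [measure_compl hAmeas (measure_ne_top _ _), hA, measure_univ]
    simp
  have hinter : ∀ s : Set Ω, μ (s ∩ U ⁻¹' Set.Ioo (0:ℝ) 1) = μ s := by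
    intro s
    refine le_antisymm (measure_mono Set.inter_subset_left) ?_
    calc μ s ≤ μ (s ∩ U ⁻¹' Set.Ioo (0:ℝ) 1 ∪ (U ⁻¹' Set.Ioo (0:ℝ) 1)ᶜ) := by
          refine measure_mono ?_
          intro ω hω
          by_cases h : U ω ∈ Set.Ioo (0:ℝ) 1
          · exact Or.inl ⟨hω, h⟩
          · exact Or.inr h
      _ ≤ μ (s ∩ U ⁻¹' Set.Ioo (0:ℝ) 1) + μ (U ⁻¹' Set.Ioo (0:ℝ) 1)ᶜ :=
          measure_union_le _ _
      _ = μ (s ∩ U ⁻¹' Set.Ioo (0:ℝ) 1) := by rw [hAc, add_zero]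
  set SY := {w : ℝ | ENNReal.ofReal α ≤ μ {ω | Y ω ≤ w}} with hSYdef
  set SS := {w : ℝ | ENNReal.ofReal α ≤ μ {ω | (Ystar ω : ℝ) ≤ w}} with hSSdef
  -- F_{Y*} ≤ F_Y pointwise, hence SS ⊆ SY
  have hle : ∀ w : ℝ, μ {ω | (Ystar ω : ℝ) ≤ w} ≤ μ {ω | Y ω ≤ w} := by
    intro w
    rw [← hinter {ω | (Ystar ω : ℝ) ≤ w}]
    refine measure_mono ?_
    rintro ω ⟨h1, h2⟩
    simp only [Set.mem_setOf_eq, hYdef] at h1 ⊢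
    have := h2.2
    linarith
  have hsub : SS ⊆ SY := by
    intro w hw
    simp only [hSSdef, hSYdef, Set.mem_setOf_eq] at hw ⊢
    exact le_trans hw (hle w)
  -- SS is nonempty
  have hSSne : SS.Nonempty := by
    have hmono : Monotone fun n : ℕ => {ω | (Ystar ω : ℝ) ≤ (n : ℝ)} := by
      intro a b hab ω hω
      simp only [Set.mem_setOf_eq] at hω ⊢
      exact le_trans hω (by exact_mod_cast Nat.cast_le.mpr hab)
    have huniv : ⋃ n : ℕ, {ω | (Ystar ω : ℝ) ≤ (n : ℝ)} = Set.univ := by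
      ext ω
      simp only [Set.mem_iUnion, Set.mem_setOf_eq, Set.mem_univ, iff_true]
      exact ⟨(Ystar ω).toNat, by exact_mod_cast Int.self_le_toNat _⟩
    have ht := tendsto_measure_iUnion_atTop (μ := μ) hmono
    rw [huniv, measure_univ] at ht
    obtain ⟨n, hn⟩ :=
      (ht.eventually (eventually_ge_nhds (ENNReal.ofReal_lt_one.mpr hα1))).exists
    exact ⟨(n : ℝ), hn⟩
  -- SS is bounded below
  obtain ⟨N, hN⟩ : ∃ n : ℕ, μ {ω | (Ystar ω : ℝ) ≤ -(n : ℝ)} < ENNReal.ofReal α := by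
    set s : ℕ → Set Ω := fun n => (fun ω => (Ystar ω : ℝ)) ⁻¹' Set.Iic (-(n : ℝ)) with hs
    have hanti : Antitone s := by
      intro a b hab ω hω
      simp only [hs, Set.mem_preimage, Set.mem_Iic] at hω ⊢
      have hab' : (a : ℝ) ≤ (b : ℝ) := by exact_mod_cast hab
      linarith
    have hint : ⋂ n, s n = ∅ := by
      ext ω
      simp only [hs, Set.mem_iInter, Set.mem_preimage, Set.mem_Iic,
        Set.mem_empty_iff_false, iff_false, not_forall]
      obtain ⟨n, hn⟩ := exists_nat_gt (-(Ystar ω : ℝ))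
      exact ⟨n, by push_neg; linarith⟩
    have ht := tendsto_measure_iInter_atTop (μ := μ)
      (fun n => (hYmeas measurableSet_Iic).nullMeasurableSet) hanti ⟨0, measure_ne_top _ _⟩
    rw [hint, measure_empty] at ht
    obtain ⟨n, hn⟩ :=
      (ht.eventually (eventually_lt_nhds (ENNReal.ofReal_pos.mpr hα0))).exists
    exact ⟨n, hn⟩
  have hSSbdd : BddBelow SS := by
    refine ⟨-(N : ℝ), fun w hw => ?_⟩
    simp only [hSSdef, Set.mem_setOf_eq] at hw
    by_contra hcon
    push_neg at hcon
    have hmono : μ {ω | (Ystar ω : ℝ) ≤ w} ≤ μ {ω | (Ystar ω : ℝ) ≤ -(N : ℝ)} :=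
      measure_mono fun ω hω => le_trans hω hcon.le
    exact absurd (le_trans hw hmono) (not_le.mpr hN)
  -- SY nonempty and bounded below
  have hSYne : SY.Nonempty := hSSne.mono hsub
  have hYside : ∀ w ∈ SY, (w + 1) ∈ SS := by
    intro w hw
    simp only [hSSdef, hSYdef, Set.mem_setOf_eq] at hw ⊢
    refine le_trans hw ?_
    rw [← hinter {ω | Y ω ≤ w}]
    refine measure_mono ?_
    rintro ω ⟨h1, h2⟩
    simp only [Set.mem_setOf_eq, hYdef] at h1 ⊢
    have := h2.1
    linarith
  have hSYbdd : BddBelow SY := by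
    obtain ⟨b, hb⟩ := hSSbdd
    exact ⟨b - 1, fun w hw => by linarith [hb (hYside w hw)]⟩
  -- notation
  have hqdef : quantile μ Y α = sInf SY := rfl
  have hsdef : quantile μ (fun ω => (Ystar ω : ℝ)) α = sInf SS := rfl
  set q := quantile μ Y α with hq
  set n : ℤ := ⌈q⌉ with hn
  have hqlt : q < (n : ℝ) :=
    lt_of_le_of_ne (Int.le_ceil q) (fun h => hnotint ⟨n, h.symm⟩)
  -- upper bound: n ∈ SS
  have hnSS : (n : ℝ) ∈ SS := by
    obtain ⟨w, hwSY, hwlt⟩ := exists_lt_of_csInf_lt hSYne (hqdef ▸ hqlt)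
    simp only [hSSdef, Set.mem_setOf_eq]
    simp only [hSYdef, Set.mem_setOf_eq] at hwSY
    refine le_trans hwSY ?_
    rw [← hinter {ω | Y ω ≤ w}]
    refine measure_mono ?_
    rintro ω ⟨h1, h2⟩
    simp only [Set.mem_setOf_eq, hYdef] at h1 ⊢
    have h3 : (Ystar ω : ℝ) < (n : ℝ) + 1 := by
      have := h2.1; push_cast; linarith
    have h4 : Ystar ω < n + 1 := by exact_mod_cast h3
    have h5 : Ystar ω ≤ n := by omega
    exact_mod_cast h5
  -- lower bound: every element of SS is ≥ n
  have hlow : ∀ w ∈ SS, (n : ℝ) ≤ w := by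
    intro w hw
    have hfloor : ((⌊w⌋ : ℝ)) ∈ SY := by
      simp only [hSSdef, Set.mem_setOf_eq] at hw
      simp only [hSYdef, Set.mem_setOf_eq]
      refine le_trans hw ?_
      rw [← hinter {ω | (Ystar ω : ℝ) ≤ w}]
      refine measure_mono ?_
      rintro ω ⟨h1, h2⟩
      simp only [Set.mem_setOf_eq] at h1 ⊢
      have h3 : Ystar ω ≤ ⌊w⌋ := Int.le_floor.mpr h1
      have h4 : (Ystar ω : ℝ) ≤ (⌊w⌋ : ℝ) := by exact_mod_cast h3
      simp only [hYdef]
      have := h2.2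
      linarith
    have hq_le : q ≤ (⌊w⌋ : ℝ) := hqdef ▸ csInf_le hSYbdd hfloor
    have h6 : n ≤ ⌊w⌋ := Int.ceil_le.mpr hq_le
    calc (n : ℝ) ≤ (⌊w⌋ : ℝ) := by exact_mod_cast h6
      _ ≤ w := Int.floor_le w
  have h1 : quantile μ (fun ω => (Ystar ω : ℝ)) α ≤ (n : ℝ) :=
    hsdef ▸ csInf_le hSSbdd hnSS
  have h2 : (n : ℝ) ≤ quantile μ (fun ω => (Ystar ω : ℝ)) α :=
    hsdef ▸ le_csInf hSSne hlow
  linarith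
end
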